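/- The cubic form F(x₀,x₁,x₂) = -6x₀x₁x₂ + 3x₀x₂² - 2x₁³ + 6x₁²x₂ - 3x₁x₂² over an algebraically closed field K of characteristic zero is not a product of three linear forms. -/

import Mathlib

open MvPolynomial

/-- The seven integer points on the cubic. -/
def pts12 : Fin 7 → Fin 3 → ℤ :=
  ![![1,0,0], ![0,0,1], ![1,3,3], ![-11,-9,9], ![2,18,9], ![-3,15,5], ![-46,-30,15]]

def detZ12 (i j k : Fin 7) : ℤ :=
  pts12 i 0 * (pts12 j 1 * pts12 k 2 - pts12 j 2 * pts12 k 1)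
  - pts12 i 1 * (pts12 j 0 * pts12 k 2 - pts12 j 2 * pts12 k 0)
  + pts12 i 2 * (pts12 j 0 * pts12 k 1 - pts12 j 1 * pts12 k 0)

lemma detZ12_ne_zero : ∀ i j k : Fin 7, i ≠ j → i ≠ k → j ≠ k → detZ12 i j k ≠ 0 := by
  decide

/-- A homogeneous degree-1 polynomial evaluates linearly. -/
lemma eval_linear {K : Type*} [Field K] {L : MvPolynomial (Fin 3) K}
    (hL : L.IsHomogeneous 1) :
    ∃ a b c : K, ∀ v : Fin 3 → K, eval v L = a * v 0 + b * v 1 + c * v 2 := by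
  refine ⟨coeff (Finsupp.single 0 1) L, coeff (Finsupp.single 1 1) L,
    coeff (Finsupp.single 2 1) L, fun v => ?_⟩
  have hshape : L = C (coeff (Finsupp.single 0 1) L) * X 0
      + C (coeff (Finsupp.single 1 1) L) * X 1
      + C (coeff (Finsupp.single 2 1) L) * X 2 := by
    ext d
    by_cases h : coeff d L = 0
    · rw [h]
      by_cases h0 : d = Finsupp.single 0 1
      · subst h0; simp [coeff_X', h, Finsupp.single_eq_single_iff]
      by_cases h1 : d = Finsupp.single 1 1
      · subst h1; simp [coeff_X', h, Finsupp.single_eq_single_iff]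
      by_cases h2 : d = Finsupp.single 2 1
      · subst h2; simp [coeff_X', h, Finsupp.single_eq_single_iff]
      · simp [coeff_X', Ne.symm h0, Ne.symm h1, Ne.symm h2]
    · have hdeg : d.degree = 1 := by
        by_contra hd
        exact h (hL.coeff_eq_zero hd)
      have hsum : d 0 + d 1 + d 2 = 1 := by
        have : d.degree = ∑ i : Fin 3, d i := by
          refine Finset.sum_subset (Finset.subset_univ _) ?_
          intro x _ hx
          exact Finsupp.notMem_support_iff.mp hx
        rw [this, Fin.sum_univ_three] at hdeg
        exact hdeg
      have : d = Finsupp.single (0 : Fin 3) 1 ∨ d = Finsupp.single 1 1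
          ∨ d = Finsupp.single 2 1 := by
        rcases Nat.eq_zero_or_pos (d 0) with h0 | h0
        · rcases Nat.eq_zero_or_pos (d 1) with h1 | h1
          · right; right
            ext m; fin_cases m <;> simp [Finsupp.single_apply, h0, h1] <;> omega
          · right; left
            ext m; fin_cases m <;> simp [Finsupp.single_apply] <;> omega
        · left
          ext m; fin_cases m <;> simp [Finsupp.single_apply] <;> omega
      rcases this with h' | h' | h' <;>
        simp [h', coeff_X', Finsupp.single_eq_single_iff]
  conv_lhs => rw [hshape]
  simp
  try ring

/-- Cramer-style elimination: a vector orthogonal to three independent vectors is zero. -/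
lemma cramer12 {K : Type*} [Field K] (a b c p0 p1 p2 q0 q1 q2 r0 r1 r2 : K)
    (hp : a * p0 + b * p1 + c * p2 = 0)
    (hq : a * q0 + b * q1 + c * q2 = 0)
    (hr : a * r0 + b * r1 + c * r2 = 0)
    (hd : p0 * (q1 * r2 - q2 * r1) - p1 * (q0 * r2 - q2 * r0)
        + p2 * (q0 * r1 - q1 * r0) ≠ 0) :
    a = 0 ∧ b = 0 ∧ c = 0 := by
  set d := p0 * (q1 * r2 - q2 * r1) - p1 * (q0 * r2 - q2 * r0)
      + p2 * (q0 * r1 - q1 * r0) with hdef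
  have ha : a * d = 0 := by
    rw [hdef]
    linear_combination (q1 * r2 - q2 * r1) * hp - (p1 * r2 - p2 * r1) * hq
      + (p1 * q2 - p2 * q1) * hr
  have hb : b * d = 0 := by
    rw [hdef]
    linear_combination (-(q0 * r2 - q2 * r0)) * hp + (p0 * r2 - p2 * r0) * hq
      - (p0 * q2 - p2 * q0) * hr
  have hc : c * d = 0 := by
    rw [hdef]
    linear_combination (q0 * r1 - q1 * r0) * hp - (p0 * r1 - p1 * r0) * hq
      + (p0 * q1 - p1 * q0) * hr
  exact ⟨by rcases mul_eq_zero.mp ha with h | h; exact h; exact absurd h hd,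
    by rcases mul_eq_zero.mp hb with h | h; exact h; exact absurd h hd,
    by rcases mul_eq_zero.mp hc with h | h; exact h; exact absurd h hd⟩

/-- The cubic form `-6x₀x₁x₂ + 3x₀x₂² - 2x₁³ + 6x₁²x₂ - 3x₁x₂²` over an
algebraically closed field of characteristic zero is not a product of three
linear forms. -/
theorem stmt_12 {K : Type*} [Field K] [IsAlgClosed K] [CharZero K] :
    ¬ ∃ L₁ L₂ L₃ : MvPolynomial (Fin 3) K,
        L₁.IsHomogeneous 1 ∧ L₂.IsHomogeneous 1 ∧ L₃.IsHomogeneous 1 ∧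
        (-6 * X 0 * X 1 * X 2 + 3 * X 0 * X 2 ^ 2 - 2 * X 1 ^ 3
            + 6 * X 1 ^ 2 * X 2 - 3 * X 1 * X 2 ^ 2 : MvPolynomial (Fin 3) K)
          = L₁ * L₂ * L₃ := by
  rintro ⟨L₁, L₂, L₃, h₁, h₂, h₃, hF⟩
  set M : Fin 3 → MvPolynomial (Fin 3) K := ![L₁, L₂, L₃] with hM
  have hhom : ∀ j : Fin 3, (M j).IsHomogeneous 1 := by
    intro j; fin_cases j <;> simpa [hM]
  have hlin : ∀ j : Fin 3, ∃ a b c : K,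
      ∀ v : Fin 3 → K, eval v (M j) = a * v 0 + b * v 1 + c * v 2 :=
    fun j => eval_linear (hhom j)
  choose A B C hABC using hlin
  -- the points as elements of K
  set w : Fin 7 → Fin 3 → K := fun i m => ((pts12 i m : ℤ) : K) with hw
  -- F vanishes at each point, so some linear factor does
  have hvan : ∀ i : Fin 7, ∃ j : Fin 3, eval (w i) (M j) = 0 := by
    intro i
    have hev := congrArg (eval (w i)) hF
    simp only [map_add, map_sub, map_mul, map_neg, map_pow, map_ofNat, eval_X] at hev
    have hzero : eval (w i) L₁ * eval (w i) L₂ * eval (w i) L₃ = 0 := by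
      rw [← hev]
      fin_cases i <;>
        · simp only [hw, pts12]
          norm_num [Matrix.cons_val_zero, Matrix.cons_val_one]
          try ring_nf
          try push_cast
          try norm_num
    rcases mul_eq_zero.mp hzero with h | h
    · rcases mul_eq_zero.mp h with h' | h'
      · exact ⟨0, by simpa [hM] using h'⟩
      · exact ⟨1, by simpa [hM] using h'⟩
    · exact ⟨2, by simpa [hM] using h⟩
  choose f hf using hvan
  -- pigeonhole: some M j vanishes at three of the points
  have hcard : (Finset.univ : Finset (Fin 3)).card * 2
      < (Finset.univ : Finset (Fin 7)).card := by simp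
  obtain ⟨y, -, hy⟩ := Finset.exists_lt_card_fiber_of_mul_lt_card_of_maps_to
    (fun a (_ : a ∈ (Finset.univ : Finset (Fin 7))) => Finset.mem_univ (f a)) hcard
  obtain ⟨i, j, k, hi, hj, hk, hij, hik, hjk⟩ := Finset.two_lt_card_iff.mp hy
  simp only [Finset.mem_filter, Finset.mem_univ, true_and] at hi hj hk
  -- M y vanishes at the three independent points w i, w j, w k
  have hEi : A y * w i 0 + B y * w i 1 + C y * w i 2 = 0 := by
    rw [← hABC y (w i), ← hi]; exact hf i
  have hEj : A y * w j 0 + B y * w j 1 + C y * w j 2 = 0 := by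
    rw [← hABC y (w j), ← hj]; exact hf j
  have hEk : A y * w k 0 + B y * w k 1 + C y * w k 2 = 0 := by
    rw [← hABC y (w k), ← hk]; exact hf k
  have hdet : w i 0 * (w j 1 * w k 2 - w j 2 * w k 1)
      - w i 1 * (w j 0 * w k 2 - w j 2 * w k 0)
      + w i 2 * (w j 0 * w k 1 - w j 1 * w k 0) ≠ 0 := by
    have hz : ((detZ12 i j k : ℤ) : K) ≠ 0 :=
      Int.cast_ne_zero.mpr (detZ12_ne_zero i j k hij hik hjk)
    simp only [detZ12] at hz
    push_cast at hz
    simpa [hw] using hz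
  obtain ⟨hA, hB, hC⟩ := cramer12 (A y) (B y) (C y) _ _ _ _ _ _ _ _ _ hEi hEj hEk hdet
  -- so M y evaluates to zero everywhere; evaluate F at (0,1,0)
  have hMy : ∀ v : Fin 3 → K, eval v (M y) = 0 := by
    intro v; rw [hABC y v, hA, hB, hC]; ring
  have hev := congrArg (eval ![0, 1, 0]) hF
  simp only [map_add, map_sub, map_mul, map_neg, map_pow, map_ofNat, eval_X] at hev
  have hrhs : eval ![(0:K), 1, 0] L₁ * eval ![(0:K), 1, 0] L₂ * eval ![(0:K), 1, 0] L₃ = 0 := by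
    have hp : ∏ jj : Fin 3, eval ![(0:K), 1, 0] (M jj) = 0 :=
      Finset.prod_eq_zero (Finset.mem_univ y) (hMy _)
    rw [Fin.prod_univ_three] at hp
    simpa [hM] using hp
  rw [hrhs] at hev
  change (-6 : K) * 0 * 1 * 0 + 3 * 0 * 0 ^ 2 - 2 * 1 ^ 3 + 6 * 1 ^ 2 * 0 - 3 * 1 * 0 ^ 2 = 0 at hev
  norm_num at hev
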